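/- (Condition C0 and value for two qubit states.) Let {(q_1, ρ_1), (q_2, ρ_2)} be an ensemble of two qubit states with q_1 ≥ q_2, Bloch vectors v_1, v_2, e_2 = q_1 − q_2, s_2 = q_2 v_2 − q_1 v_1 ≠ 0, and l_2 = ‖s_2‖₂. Then every optimal 2-outcome POVM has both elements nonzero if and only if l_2 > e_2; and in that case p_guess = q_1 + (l_2 − e_2)/2 = (1 + ‖q_1 v_1 − q_2 v_2‖₂)/2. -/

import Mathlib

open Matrix
open scoped ComplexOrder

noncomputable section

/-- The Pauli matrix σ_X. -/
def sigmaX : Matrix (Fin 2) (Fin 2) ℂ := !![0, 1; 1, 0]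

/-- The Pauli matrix σ_Y. -/
def sigmaY : Matrix (Fin 2) (Fin 2) ℂ := !![0, -Complex.I; Complex.I, 0]

/-- The Pauli matrix σ_Z. -/
def sigmaZ : Matrix (Fin 2) (Fin 2) ℂ := !![1, 0; 0, -1]

/-- `v · σ = v₁ σ_X + v₂ σ_Y + v₃ σ_Z` for a vector `v ∈ ℝ³`. -/
def pauliDot (v : EuclideanSpace ℝ (Fin 3)) : Matrix (Fin 2) (Fin 2) ℂ :=
  (v 0 : ℂ) • sigmaX + (v 1 : ℂ) • sigmaY + (v 2 : ℂ) • sigmaZ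

/-- A qubit state: a 2×2 complex positive semidefinite matrix with trace 1. -/
def IsQubitState (ρ : Matrix (Fin 2) (Fin 2) ℂ) : Prop :=
  ρ.PosSemidef ∧ ρ.trace = 1

/-- An `N`-outcome POVM: positive semidefinite matrices summing to the identity. -/
def IsPOVM {N : ℕ} (M : Fin N → Matrix (Fin 2) (Fin 2) ℂ) : Prop :=
  (∀ i, (M i).PosSemidef) ∧ ∑ i, M i = 1

/-- The guessing probability of the ensemble `{(q i, ρ i)}`:
the supremum over all `N`-outcome POVMs of `∑ i, q i · Re (tr (ρ i * M i))`. -/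
def pGuess {N : ℕ} (q : Fin N → ℝ) (ρ : Fin N → Matrix (Fin 2) (Fin 2) ℂ) : ℝ :=
  sSup {x : ℝ | ∃ M : Fin N → Matrix (Fin 2) (Fin 2) ℂ,
    IsPOVM M ∧ x = ∑ i, q i * ((ρ i * M i).trace).re}

/-- A POVM is optimal when it attains the guessing probability. -/
def IsOptimalPOVM {N : ℕ} (q : Fin N → ℝ) (ρ M : Fin N → Matrix (Fin 2) (Fin 2) ℂ) : Prop :=
  IsPOVM M ∧ ∑ i, q i * ((ρ i * M i).trace).re = pGuess q ρ



lemma pauliDot_eq (v : EuclideanSpace ℝ (Fin 3)) :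
    pauliDot v = !![(v 2 : ℂ), (v 0 : ℂ) - (v 1 : ℂ) * Complex.I;
                    (v 0 : ℂ) + (v 1 : ℂ) * Complex.I, -(v 2 : ℂ)] := by
  unfold pauliDot sigmaX sigmaY sigmaZ
  ext i j
  fin_cases i <;> fin_cases j <;> simp <;> ring

lemma pauliDot_trace (v : EuclideanSpace ℝ (Fin 3)) : (pauliDot v).trace = 0 := by
  rw [pauliDot_eq, Matrix.trace_fin_two_of]; ring

lemma pauliDot_isHermitian (v : EuclideanSpace ℝ (Fin 3)) : (pauliDot v).IsHermitian := by
  rw [pauliDot_eq]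
  ext i j
  fin_cases i <;> fin_cases j <;>
    simp [Matrix.conjTranspose_apply, Complex.ext_iff]

lemma pauliDot_mul_self (w : EuclideanSpace ℝ (Fin 3)) :
    pauliDot w * pauliDot w = ((w 0 ^ 2 + w 1 ^ 2 + w 2 ^ 2 : ℝ) : ℂ) • 1 := by
  rw [pauliDot_eq]
  ext i j
  fin_cases i <;> fin_cases j <;>
    simp [Matrix.mul_apply, Fin.sum_univ_two, Matrix.one_apply, Complex.ext_iff,
      ← Complex.ofReal_pow] <;>
    constructor <;> ring_nf <;> simp

lemma pauliDot_linear (a b : ℝ) (u v : EuclideanSpace ℝ (Fin 3)) :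
    pauliDot (a • u - b • v) = (a : ℂ) • pauliDot u - (b : ℂ) • pauliDot v := by
  unfold pauliDot
  simp only [PiLp.smul_apply, PiLp.sub_apply, smul_eq_mul, Complex.ofReal_sub,
    Complex.ofReal_mul]
  module

lemma euclidean_norm_sq_eq (w : EuclideanSpace ℝ (Fin 3)) :
    ‖w‖ ^ 2 = w 0 ^ 2 + w 1 ^ 2 + w 2 ^ 2 := by
  rw [EuclideanSpace.norm_eq, Real.sq_sqrt (by positivity)]
  simp [Fin.sum_univ_three, Real.norm_eq_abs, sq_abs]

lemma psd_trace_nonneg {m : Type*} [Fintype m] [DecidableEq m]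
    {A : Matrix m m ℂ} (hA : A.PosSemidef) : 0 ≤ A.trace := by
  refine Finset.sum_nonneg fun i _ => ?_
  have := hA.diag_nonneg (i := i)
  simpa [dotProduct, Pi.single_apply, Finset.sum_ite_eq'] using this

lemma trace_mul_psd_nonneg {m : Type*} [Fintype m] [DecidableEq m]
    {A B : Matrix m m ℂ} (hA : A.PosSemidef) (hB : B.PosSemidef) :
    0 ≤ (A * B).trace := by
  open scoped MatrixOrder in
  obtain ⟨C, rfl⟩ := CStarAlgebra.nonneg_iff_eq_star_mul_self.mp hA.nonneg
  rw [Matrix.star_eq_conjTranspose, Matrix.mul_assoc, Matrix.trace_mul_comm]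
  exact psd_trace_nonneg (hB.mul_mul_conjTranspose_same C)

/-- The Bloch projector `(I + ŵ·σ)/2`. -/
def projP (w : EuclideanSpace ℝ (Fin 3)) : Matrix (Fin 2) (Fin 2) ℂ :=
  (2⁻¹ : ℂ) • (1 + ((‖w‖⁻¹ : ℝ) : ℂ) • pauliDot w)

/-- The Bloch projector `(I - ŵ·σ)/2`. -/
def projM (w : EuclideanSpace ℝ (Fin 3)) : Matrix (Fin 2) (Fin 2) ℂ :=
  (2⁻¹ : ℂ) • (1 - ((‖w‖⁻¹ : ℝ) : ℂ) • pauliDot w)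

lemma half_proj_mul {X : Matrix (Fin 2) (Fin 2) ℂ} (h : X * X = 1) :
    ((2⁻¹ : ℂ) • (1 + X)) * ((2⁻¹ : ℂ) • (1 + X)) = (2⁻¹ : ℂ) • (1 + X) := by
  rw [smul_mul_smul_comm, add_mul, mul_add, mul_add, one_mul, mul_one, one_mul, h]
  module

lemma half_proj_mul' {X : Matrix (Fin 2) (Fin 2) ℂ} (h : X * X = 1) :
    ((2⁻¹ : ℂ) • (1 - X)) * ((2⁻¹ : ℂ) • (1 - X)) = (2⁻¹ : ℂ) • (1 - X) := by
  rw [smul_mul_smul_comm, sub_mul, mul_sub, mul_sub, one_mul, mul_one, one_mul, h]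
  module

lemma half_proj_mul'' {X : Matrix (Fin 2) (Fin 2) ℂ} (h : X * X = 1) :
    ((2⁻¹ : ℂ) • (1 - X)) * ((2⁻¹ : ℂ) • (1 + X)) = 0 := by
  rw [smul_mul_smul_comm, sub_mul, mul_add, mul_add, one_mul, mul_one, one_mul, h]
  module

lemma proj_sum (w : EuclideanSpace ℝ (Fin 3)) : projP w + projM w = 1 := by
  unfold projP projM; module

lemma X_sq {w : EuclideanSpace ℝ (Fin 3)} (hw : w ≠ 0) :
    (((‖w‖⁻¹ : ℝ) : ℂ) • pauliDot w) * (((‖w‖⁻¹ : ℝ) : ℂ) • pauliDot w) = 1 := by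
  have hn : (‖w‖ : ℝ) ≠ 0 := norm_ne_zero_iff.mpr hw
  rw [smul_mul_smul_comm, pauliDot_mul_self, ← euclidean_norm_sq_eq, smul_smul]
  rw [show ((‖w‖⁻¹ : ℝ) : ℂ) * ((‖w‖⁻¹ : ℝ) : ℂ) * ((‖w‖ ^ 2 : ℝ) : ℂ) = 1 by
    push_cast; field_simp]
  rw [one_smul]

lemma projP_mul_projP {w : EuclideanSpace ℝ (Fin 3)} (hw : w ≠ 0) :
    projP w * projP w = projP w := half_proj_mul (X_sq hw)

lemma projM_mul_projM {w : EuclideanSpace ℝ (Fin 3)} (hw : w ≠ 0) :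
    projM w * projM w = projM w := half_proj_mul' (X_sq hw)

lemma projM_mul_projP {w : EuclideanSpace ℝ (Fin 3)} (hw : w ≠ 0) :
    projM w * projP w = 0 := half_proj_mul'' (X_sq hw)

lemma projP_herm (w : EuclideanSpace ℝ (Fin 3)) : (projP w).IsHermitian := by
  unfold projP
  have h := pauliDot_isHermitian w
  unfold Matrix.IsHermitian at *
  simp [Matrix.conjTranspose_smul, Matrix.conjTranspose_add, h, Complex.star_def,
    Complex.conj_ofReal]

lemma projM_herm (w : EuclideanSpace ℝ (Fin 3)) : (projM w).IsHermitian := by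
  unfold projM
  have h := pauliDot_isHermitian w
  unfold Matrix.IsHermitian at *
  simp [Matrix.conjTranspose_smul, Matrix.conjTranspose_sub, h, Complex.star_def,
    Complex.conj_ofReal]

lemma projP_psd {w : EuclideanSpace ℝ (Fin 3)} (hw : w ≠ 0) : (projP w).PosSemidef := by
  have h : projP w = (projP w)ᴴ * projP w := by rw [projP_herm, projP_mul_projP hw]
  rw [h]; exact Matrix.posSemidef_conjTranspose_mul_self _

lemma projM_psd {w : EuclideanSpace ℝ (Fin 3)} (hw : w ≠ 0) : (projM w).PosSemidef := by
  have h : projM w = (projM w)ᴴ * projM w := by rw [projM_herm, projM_mul_projM hw]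
  rw [h]; exact Matrix.posSemidef_conjTranspose_mul_self _

lemma projP_trace (w : EuclideanSpace ℝ (Fin 3)) : (projP w).trace = 1 := by
  unfold projP
  rw [Matrix.trace_smul, Matrix.trace_add, Matrix.trace_smul, pauliDot_trace,
    Matrix.trace_one]
  simp

lemma projM_trace (w : EuclideanSpace ℝ (Fin 3)) : (projM w).trace = 1 := by
  unfold projM
  rw [Matrix.trace_smul, Matrix.trace_sub, Matrix.trace_smul, pauliDot_trace,
    Matrix.trace_one]
  simp

/-- Condition C0 and value for two qubit states. Lean indices
`0, 1` play the roles of paper indices `1, 2`, so `q 0 ≥ q 1`,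
`e₂ = q 0 - q 1`, `s₂ = q 1 • v 1 - q 0 • v 0` and `l₂ = ‖s₂‖`. -/
theorem condC0_two_states
    (q : Fin 2 → ℝ) (v : Fin 2 → EuclideanSpace ℝ (Fin 3))
    (ρ : Fin 2 → Matrix (Fin 2) (Fin 2) ℂ)
    (hq : ∀ i, 0 < q i) (hqsum : ∑ i, q i = 1)
    (hv : ∀ i, ‖v i‖ ≤ 1)
    (hρ : ∀ i, ρ i = (2⁻¹ : ℂ) • (1 + pauliDot (v i)))
    (hmax : q 1 ≤ q 0)
    (e₂ : ℝ) (he : e₂ = q 0 - q 1)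
    (s₂ : EuclideanSpace ℝ (Fin 3)) (hs : s₂ = q 1 • v 1 - q 0 • v 0)
    (hs0 : s₂ ≠ 0)
    (l₂ : ℝ) (hl : l₂ = ‖s₂‖) :
    ((∀ M : Fin 2 → Matrix (Fin 2) (Fin 2) ℂ,
        IsOptimalPOVM q ρ M → M 0 ≠ 0 ∧ M 1 ≠ 0) ↔ e₂ < l₂) ∧
    (e₂ < l₂ →
      pGuess q ρ = q 0 + (l₂ - e₂) / 2 ∧
      q 0 + (l₂ - e₂) / 2 = (1 + ‖q 0 • v 0 - q 1 • v 1‖) / 2) := by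
  classical
  set w : EuclideanSpace ℝ (Fin 3) := q 0 • v 0 - q 1 • v 1 with hwdef
  have hswk : s₂ = -w := by rw [hs, hwdef]; abel
  have hw0 : w ≠ 0 := fun h => hs0 (by rw [hswk, h, neg_zero])
  have hlw : l₂ = ‖w‖ := by rw [hl, hswk, norm_neg]
  have hnpos : 0 < ‖w‖ := norm_pos_iff.mpr hw0
  have hn : (‖w‖ : ℝ) ≠ 0 := ne_of_gt hnpos
  have hnC : ((‖w‖ : ℝ) : ℂ) ≠ 0 := by exact_mod_cast hn
  have hq0 : 0 < q 0 := hq 0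
  have hq1 : 0 < q 1 := hq 1
  have he2 : 0 ≤ e₂ := by rw [he]; linarith
  have hqs : q 0 + q 1 = 1 := by simpa [Fin.sum_univ_two] using hqsum
  -- traces of the states
  have htrρ : ∀ i, (ρ i).trace = 1 := by
    intro i
    rw [hρ i, Matrix.trace_smul, Matrix.trace_add, Matrix.trace_one, pauliDot_trace]
    simp
  -- the spectral decomposition of the Helstrom matrix
  have hΔ : (q 0 : ℂ) • ρ 0 - (q 1 : ℂ) • ρ 1
      = (((e₂ + ‖w‖) / 2 : ℝ) : ℂ) • projP w + (((e₂ - ‖w‖) / 2 : ℝ) : ℂ) • projM w := by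
    rw [hρ 0, hρ 1, he]
    unfold projP projM
    rw [show pauliDot w = (q 0 : ℂ) • pauliDot (v 0) - (q 1 : ℂ) • pauliDot (v 1) by
      rw [hwdef, pauliDot_linear]]
    match_scalars <;> push_cast <;> field_simp <;> ring
  -- value of a POVM
  have hval : ∀ M : Fin 2 → Matrix (Fin 2) (Fin 2) ℂ, IsPOVM M →
      ∑ i, q i * ((ρ i * M i).trace).re
        = q 1 + (e₂ + ‖w‖) / 2 * ((projP w * M 0).trace).re
            + (e₂ - ‖w‖) / 2 * ((projM w * M 0).trace).re := by
    intro M hM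
    have hM1 : M 1 = 1 - M 0 := by
      have h := hM.2; rw [Fin.sum_univ_two] at h
      exact eq_sub_of_add_eq' h
    have key : (q 0 : ℂ) * (ρ 0 * M 0).trace + (q 1 : ℂ) * (ρ 1 * M 1).trace
        = (q 1 : ℂ) + (((e₂ + ‖w‖) / 2 : ℝ) : ℂ) * (projP w * M 0).trace
            + (((e₂ - ‖w‖) / 2 : ℝ) : ℂ) * (projM w * M 0).trace := by
      have h2 := congrArg (fun X => (X * M 0).trace) hΔ
      simp only [Matrix.sub_mul, Matrix.add_mul, Matrix.smul_mul, Matrix.trace_sub,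
        Matrix.trace_add, Matrix.trace_smul, smul_eq_mul] at h2
      rw [hM1, Matrix.mul_sub, Matrix.mul_one, Matrix.trace_sub, htrρ 1]
      linear_combination h2
    calc ∑ i, q i * ((ρ i * M i).trace).re
        = ((q 0 : ℂ) * (ρ 0 * M 0).trace + (q 1 : ℂ) * (ρ 1 * M 1).trace).re := by
          simp [Fin.sum_univ_two, Complex.add_re, Complex.re_ofReal_mul]
      _ = _ := by
          rw [key]
          simp [Complex.add_re, Complex.re_ofReal_mul]
  -- bounds on the overlaps
  have hb : ∀ M : Fin 2 → Matrix (Fin 2) (Fin 2) ℂ, IsPOVM M →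
      (0 ≤ ((projP w * M 0).trace).re ∧ ((projP w * M 0).trace).re ≤ 1) ∧
      (0 ≤ ((projM w * M 0).trace).re ∧ ((projM w * M 0).trace).re ≤ 1) := by
    intro M hM
    have hM1 : M 1 = 1 - M 0 := by
      have h := hM.2; rw [Fin.sum_univ_two] at h
      exact eq_sub_of_add_eq' h
    have h0 := hM.1 0
    have h1 := hM.1 1; rw [hM1] at h1
    have key : ∀ P : Matrix (Fin 2) (Fin 2) ℂ, P.PosSemidef → P.trace = 1 →
        0 ≤ ((P * M 0).trace).re ∧ ((P * M 0).trace).re ≤ 1 := by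
      intro P hP hPt
      have a1 := trace_mul_psd_nonneg hP h0
      have a2 := trace_mul_psd_nonneg hP h1
      rw [Matrix.mul_sub, Matrix.mul_one, Matrix.trace_sub, hPt] at a2
      have b1 := (Complex.le_def.mp a1).1
      have b2 := (Complex.le_def.mp a2).1
      simp [Complex.sub_re] at b1 b2
      constructor <;> linarith
    exact ⟨key _ (projP_psd hw0) (projP_trace w), key _ (projM_psd hw0) (projM_trace w)⟩
  -- the POVM (P₊, P₋)
  have hpovmP : IsPOVM ![projP w, projM w] := by
    constructor
    · intro i
      fin_cases i
      · simpa using projP_psd hw0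
      · simpa using projM_psd hw0
    · rw [Fin.sum_univ_two]
      simpa using proj_sum w
  have hvalP : ∑ i, q i * ((ρ i * (![projP w, projM w]) i).trace).re
      = q 1 + (e₂ + ‖w‖) / 2 := by
    rw [hval _ hpovmP]
    simp only [Matrix.cons_val_zero]
    rw [projP_mul_projP hw0, projM_mul_projP hw0, projP_trace, Matrix.trace_zero]
    simp
  -- the trivial POVM (1, 0)
  have hpovm1 : IsPOVM ![(1 : Matrix (Fin 2) (Fin 2) ℂ), 0] := by
    constructor
    · intro i
      fin_cases i
      · simpa using Matrix.PosSemidef.one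
      · simpa using Matrix.PosSemidef.zero
    · rw [Fin.sum_univ_two]; simp
  have hval1 : ∑ i, q i * ((ρ i * (![(1 : Matrix (Fin 2) (Fin 2) ℂ), 0]) i).trace).re
      = q 0 := by
    rw [hval _ hpovm1]
    simp only [Matrix.cons_val_zero]
    rw [Matrix.mul_one, Matrix.mul_one, projP_trace, projM_trace]
    simp
    linarith
  -- guessing probability in the two regimes
  have hPG : e₂ < ‖w‖ → pGuess q ρ = q 1 + (e₂ + ‖w‖) / 2 := by
    intro hlt
    have hub : ∀ x ∈ {x : ℝ | ∃ M : Fin 2 → Matrix (Fin 2) (Fin 2) ℂ,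
        IsPOVM M ∧ x = ∑ i, q i * ((ρ i * M i).trace).re},
        x ≤ q 1 + (e₂ + ‖w‖) / 2 := by
      rintro x ⟨M, hM, rfl⟩
      rw [hval M hM]
      obtain ⟨⟨ha0, ha1⟩, ⟨hb0, hb1⟩⟩ := hb M hM
      nlinarith
    unfold pGuess
    apply le_antisymm
    · exact Real.sSup_le hub (by linarith)
    · exact le_csSup ⟨_, hub⟩ ⟨_, hpovmP, hvalP.symm⟩
  have hPG' : ‖w‖ ≤ e₂ → pGuess q ρ = q 0 := by
    intro hle
    have hub : ∀ x ∈ {x : ℝ | ∃ M : Fin 2 → Matrix (Fin 2) (Fin 2) ℂ,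
        IsPOVM M ∧ x = ∑ i, q i * ((ρ i * M i).trace).re},
        x ≤ q 0 := by
      rintro x ⟨M, hM, rfl⟩
      rw [hval M hM]
      obtain ⟨⟨ha0, ha1⟩, ⟨hb0, hb1⟩⟩ := hb M hM
      nlinarith
    unfold pGuess
    apply le_antisymm
    · exact Real.sSup_le hub (by linarith)
    · exact le_csSup ⟨_, hub⟩ ⟨_, hpovm1, hval1.symm⟩
  constructor
  · constructor
    · intro H
      by_contra hc
      push_neg at hc
      have hle : ‖w‖ ≤ e₂ := by rw [← hlw]; exact hc
      have hopt : IsOptimalPOVM q ρ ![(1 : Matrix (Fin 2) (Fin 2) ℂ), 0] :=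
        ⟨hpovm1, by rw [hval1, hPG' hle]⟩
      exact (H _ hopt).2 (by simp)
    · intro h M hopt
      have hlt : e₂ < ‖w‖ := by rw [← hlw]; exact h
      have hPGv := hPG hlt
      constructor
      · intro h0
        have hv2 := hopt.2
        rw [hval M hopt.1, h0, Matrix.mul_zero, Matrix.trace_zero, hPGv] at hv2
        simp at hv2
        linarith
      · intro h1
        have hM0 : M 0 = 1 := by
          have hsum := hopt.1.2
          rw [Fin.sum_univ_two, h1, add_zero] at hsum
          exact hsum
        have hv2 := hopt.2
        rw [hval M hopt.1, hM0, Matrix.mul_one, Matrix.mul_one, projP_trace,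
          projM_trace, hPGv] at hv2
        simp at hv2
        linarith
  · intro h
    have hlt : e₂ < ‖w‖ := by rw [← hlw]; exact h
    constructor
    · rw [hPG hlt, hlw]; linarith [he]
    · rw [hlw, he]
      field_simp
      linarith


end
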